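/- For any α ∈ S_{2t} and any β ∈ S_{2t} with β(x) and x of different parities for all x ∈ {1,...,2t}, one has c(α) + c(βα^{-1}) ≤ 3t, where c denotes the number of cycles (orbits, including fixed points). -/

import Mathlib

open Module LinearMap MulAction

noncomputable def cycleCount {n : ℕ} (σ : Equiv.Perm (Fin n)) : ℕ :=
  Nat.card (MulAction.orbitRel.Quotient (Subgroup.zpowers σ) (Fin n))

section aux
variable {n : ℕ}

/-- the linear action v ↦ v ∘ σ on ℚ^n -/
noncomputable def Fmap (σ : Equiv.Perm (Fin n)) : (Fin n → ℚ) →ₗ[ℚ] (Fin n → ℚ) :=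
  LinearMap.funLeft ℚ ℚ σ

lemma inv_aux (σ : Equiv.Perm (Fin n)) (v : Fin n → ℚ) (hv : ∀ x, v (σ x) = v x) :
    ∀ (k : ℤ) (x : Fin n), v ((σ ^ k) x) = v x := by
  have hinv : ∀ x, v (σ⁻¹ x) = v x := by
    intro x
    conv_rhs => rw [← Equiv.apply_symm_apply σ x]
    rw [← hv (σ⁻¹ x)]
    simp
  intro k
  induction k using Int.induction_on with
  | zero => simp
  | succ k ih =>
    intro x
    have : (σ ^ ((k : ℤ) + 1)) x = (σ ^ (k : ℤ)) (σ x) := by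
      rw [zpow_add, zpow_one]; rfl
    rw [this, ih, hv]
  | pred k ih =>
    intro x
    have : (σ ^ (-(k : ℤ) - 1)) x = (σ ^ (-(k : ℤ))) (σ⁻¹ x) := by
      rw [sub_eq_add_neg, zpow_add, zpow_neg_one]; rfl
    rw [this, ih, hinv]

lemma finrank_fixed (σ : Equiv.Perm (Fin n)) :
    finrank ℚ (LinearMap.ker (Fmap σ - LinearMap.id)) = cycleCount σ := by
  classical
  set Q := MulAction.orbitRel.Quotient (Subgroup.zpowers σ) (Fin n) with hQ
  have : Fintype Q := Fintype.ofFinite Q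
  set mk : Fin n → Q := Quotient.mk (MulAction.orbitRel (Subgroup.zpowers σ) (Fin n)) with hmk
  have hmksurj : Function.Surjective mk := Quot.mk_surjective
  set e : (Q → ℚ) →ₗ[ℚ] (Fin n → ℚ) := LinearMap.funLeft ℚ ℚ mk with he
  have hinj : Function.Injective e :=
    LinearMap.funLeft_injective_of_surjective ℚ ℚ _ hmksurj
  have hrange : LinearMap.range e = LinearMap.ker (Fmap σ - LinearMap.id) := by
    ext v
    constructor
    · rintro ⟨u, rfl⟩
      simp only [LinearMap.mem_ker, LinearMap.sub_apply, LinearMap.id_apply]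
      funext x
      have hx : mk (σ x) = mk x := by
        apply Quotient.sound
        exact ⟨⟨σ, Subgroup.mem_zpowers σ⟩, rfl⟩
      simp only [Fmap, LinearMap.funLeft_apply, Pi.sub_apply, Function.comp]
      simp [he, LinearMap.funLeft_apply, hx]
    · intro hv
      simp only [LinearMap.mem_ker, LinearMap.sub_apply, LinearMap.id_apply, sub_eq_zero] at hv
      have hvfix : ∀ x, v (σ x) = v x := by
        intro x
        have := congrFun hv x
        simpa [Fmap, LinearMap.funLeft_apply] using this
      have hconst : ∀ a b : Fin n,
          (MulAction.orbitRel (Subgroup.zpowers σ) (Fin n)).r a b → v a = v b := by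
        intro a b hab
        obtain ⟨⟨g, k, rfl⟩, rfl⟩ := hab
        exact inv_aux σ v hvfix k b
      refine ⟨Quotient.lift v hconst, ?_⟩
      funext x
      rfl
  have := LinearEquiv.finrank_eq (LinearEquiv.ofInjective e hinj)
  rw [hrange] at this
  rw [← this, Module.finrank_pi ℚ]
  simp [cycleCount, Nat.card_eq_fintype_card, hQ]

lemma cycleCount_key (x y : Equiv.Perm (Fin n)) :
    cycleCount x + cycleCount y ≤ n + cycleCount (x * y) := by
  classical
  set fx := Fmap x - LinearMap.id with hfx
  set fy := Fmap y - LinearMap.id with hfy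
  set fxy := Fmap (x * y) - LinearMap.id with hfxy
  have hdecomp : fxy = (Fmap y).comp fx + fy := by
    ext v i
    simp [hfx, hfy, hfxy, Fmap, LinearMap.funLeft_apply, Equiv.Perm.mul_apply]
  have hsub : LinearMap.range fxy ≤ LinearMap.range ((Fmap y).comp fx) ⊔ LinearMap.range fy := by
    rintro w ⟨v, rfl⟩
    rw [hdecomp]
    exact Submodule.add_mem_sup (LinearMap.mem_range_self _ v) (LinearMap.mem_range_self _ v)
  have h1 : finrank ℚ (LinearMap.range fxy) ≤
      finrank ℚ (LinearMap.range fx) + finrank ℚ (LinearMap.range fy) := by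
    calc finrank ℚ (LinearMap.range fxy)
        ≤ finrank ℚ ((LinearMap.range ((Fmap y).comp fx)) ⊔ LinearMap.range fy : Submodule ℚ _) :=
          Submodule.finrank_mono hsub
      _ ≤ finrank ℚ (LinearMap.range ((Fmap y).comp fx)) + finrank ℚ (LinearMap.range fy) :=
          Submodule.finrank_add_le_finrank_add_finrank _ _
      _ ≤ finrank ℚ (LinearMap.range fx) + finrank ℚ (LinearMap.range fy) := by
          gcongr
          rw [LinearMap.range_comp]
          exact Submodule.finrank_map_le _ _
  have hrn : ∀ f : (Fin n → ℚ) →ₗ[ℚ] (Fin n → ℚ),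
      finrank ℚ (LinearMap.range f) + finrank ℚ (LinearMap.ker f) = n := by
    intro f
    rw [LinearMap.finrank_range_add_finrank_ker, Module.finrank_pi, Fintype.card_fin]
  have ex := hrn fx; have ey := hrn fy; have exy := hrn fxy
  have kx := finrank_fixed x; have ky := finrank_fixed y; have kxy := finrank_fixed (x * y)
  rw [← hfx] at kx; rw [← hfy] at ky; rw [← hfxy] at kxy
  omega

lemma cycleCount_le_half (t : ℕ) (β : Equiv.Perm (Fin (2 * t)))
    (hβ : ∀ x : Fin (2 * t), (β x : ℕ) % 2 ≠ (x : ℕ) % 2) :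
    cycleCount β ≤ t := by
  classical
  set G := Subgroup.zpowers β with hG
  set Ω := MulAction.orbitRel.Quotient G (Fin (2 * t)) with hΩ
  have : Fintype Ω := Fintype.ofFinite Ω
  have hcard : Fintype.card (Fin (2 * t)) = ∑ ω : Ω, Nat.card (MulAction.orbit G ω.out) := by
    rw [Fintype.card_congr (MulAction.selfEquivSigmaOrbits G (Fin (2 * t)))]
    rw [Fintype.card_sigma]
    congr 1
    ext ω
    exact (Nat.card_eq_fintype_card).symm
  have horb : ∀ ω : Ω, 2 ≤ Nat.card (MulAction.orbit G ω.out) := by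
    intro ω
    have h1 : ω.out ∈ MulAction.orbit G ω.out := MulAction.mem_orbit_self _
    have h2 : β ω.out ∈ MulAction.orbit G ω.out :=
      ⟨⟨β, Subgroup.mem_zpowers β⟩, rfl⟩
    have hne : β ω.out ≠ ω.out := by
      intro h
      exact hβ ω.out (by rw [h])
    rw [Nat.card_coe_set_eq]
    exact Set.one_lt_ncard_iff (Set.toFinite _) |>.2 ⟨_, _, h2, h1, hne⟩
  have : 2 * cycleCount β ≤ 2 * t := by
    calc 2 * cycleCount β = ∑ _ω : Ω, 2 := by
          simp [cycleCount, Nat.card_eq_fintype_card, ← hΩ, ← hG, mul_comm]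
          exact Fintype.card_congr (Equiv.refl _)
      _ ≤ ∑ ω : Ω, Nat.card (MulAction.orbit G ω.out) :=
          Finset.sum_le_sum fun ω _ => horb ω
      _ = 2 * t := by rw [← hcard, Fintype.card_fin]
  omega

end aux

theorem cycleCount_add_cycleCount_le_three_t (t : ℕ) (α β : Equiv.Perm (Fin (2 * t)))
    (hβ : ∀ x : Fin (2 * t), (β x : ℕ) % 2 ≠ (x : ℕ) % 2) :
    cycleCount α + cycleCount (β * α⁻¹) ≤ 3 * t := by
  have h1 := cycleCount_key (β * α⁻¹) α
  rw [inv_mul_cancel_right] at h1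
  have h2 := cycleCount_le_half t β hβ
  omega
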